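/- arXiv:2111.04055 — 2 statements merged into one kernel-verified Lean document; each statement's English description precedes it below -/
import Mathlib

section
/- Let Ψ¹, Ψ² be a pair of orthogonal partitioned incomplete quantum Latin squares of type hⁿ (holes V₁,...,V_n on the diagonal, each of dimension h, partitioning ℂ^{hn}), and let Φ¹, Φ² be a pair of orthogonal quantum Latin squares of dimension m. Then the arrays Ψ with entries Ψ¹_{i,j} ⊗ Φ¹_{l,k} and Φ with entries Ψ²_{i,j} ⊗ Φ²_{l,k} (indexed by ((i,l),(j,k)) and defined whenever the (i,j) cell is nonempty) form a pair of orthogonal partitioned incomplete quantum Latin squares of type (hm)ⁿ, with holes V_s ⊗ ℂ^m. -/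
noncomputable section

/-- The inner product on a complex inner product space, as a function into `ℂ`. -/
def ip {E : Type*} [NormedAddCommGroup E] [InnerProductSpace ℂ E] (x y : E) : ℂ :=
  inner ℂ x y

/-- Concrete tensor product `ℂ^a ⊗ ℂ^b ≃ ℂ^(a × b)` of two vectors. -/
def tens {a b : Type*} [Fintype a] [Fintype b] (u : EuclideanSpace ℂ a)
    (v : EuclideanSpace ℂ b) : EuclideanSpace ℂ (a × b) :=
  WithLp.toLp 2 (fun p => u p.1 * v p.2)

/-- Entrywise complex conjugation of a vector (in the standard basis). -/
def conjE {ι : Type*} [Fintype ι] (v : EuclideanSpace ℂ ι) : EuclideanSpace ℂ ι :=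
  WithLp.toLp 2 (fun k => star (v k))

/-- The hole subspace `V_s` of `ℂ^{[n] × α}`: the span of the standard basis vectors
indexed by `{s} × α`. A partitioned incomplete quantum Latin square of type `|α|ⁿ` has
rows and columns indexed by `Fin n × α`, the hole `V_s` corresponding to indices
with first component `s`. -/
def holeSub (n : ℕ) (α : Type*) [Fintype α] [DecidableEq α] (s : Fin n) :
    Submodule ℂ (EuclideanSpace ℂ (Fin n × α)) :=
  Submodule.span ℂ (Set.range fun x : α => EuclideanSpace.single ((s, x)) (1 : ℂ))

/-- A partitioned incomplete quantum Latin square (PIQLS) of type `|α|ⁿ` on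
`ℂ^{[n] × α}`, with holes `V_1, …, V_n` on the diagonal: the cells `(r, c)` with
`r.1 = c.1` are empty (unconstrained), and every row (resp. column) indexed in hole `s`
consists of vectors forming an orthonormal basis of the orthogonal complement `V_sᗮ`. -/
def IsPIQLS {n : ℕ} {α : Type*} [Fintype α] [DecidableEq α]
    (Ψ : (Fin n × α) → (Fin n × α) → EuclideanSpace ℂ (Fin n × α)) : Prop :=
  (∀ r : Fin n × α,
    Orthonormal ℂ (fun c : {c : Fin n × α // c.1 ≠ r.1} => Ψ r c) ∧
    (∀ c : Fin n × α, c.1 ≠ r.1 → Ψ r c ∈ (holeSub n α r.1)ᗮ) ∧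
    Submodule.span ℂ (Set.range fun c : {c : Fin n × α // c.1 ≠ r.1} => Ψ r c) =
      (holeSub n α r.1)ᗮ) ∧
  (∀ c : Fin n × α,
    Orthonormal ℂ (fun r : {r : Fin n × α // r.1 ≠ c.1} => Ψ r c) ∧
    (∀ r : Fin n × α, r.1 ≠ c.1 → Ψ r c ∈ (holeSub n α c.1)ᗮ) ∧
    Submodule.span ℂ (Set.range fun r : {r : Fin n × α // r.1 ≠ c.1} => Ψ (r : Fin n × α) c) =
      (holeSub n α c.1)ᗮ)

/-- The subspace `⊕_s V_s ⊗ V_s` of `ℂ^{[n]×α} ⊗ ℂ^{[n]×α}`. -/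
def bigHole (n : ℕ) (α : Type*) [Fintype α] [DecidableEq α] :
    Submodule ℂ (EuclideanSpace ℂ ((Fin n × α) × (Fin n × α))) :=
  Submodule.span ℂ (Set.range fun z : Fin n × α × α =>
    EuclideanSpace.single (((z.1, z.2.1), (z.1, z.2.2))) (1 : ℂ))

/-- Two PIQLSs with the same holes are orthogonal: the tensor products
`Ψ¹_{r,c} ⊗ Ψ²_{r,c}` over all filled cells form an orthonormal basis of
`(ℂ^D ⊗ ℂ^D) ⊖ ⊕_s (V_s ⊗ V_s)`. -/
def OrthPIQLS {n : ℕ} {α : Type*} [Fintype α] [DecidableEq α]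
    (Ψ₁ Ψ₂ : (Fin n × α) → (Fin n × α) → EuclideanSpace ℂ (Fin n × α)) : Prop :=
  Orthonormal ℂ (fun p : {q : (Fin n × α) × (Fin n × α) // q.1.1 ≠ q.2.1} =>
    tens (Ψ₁ p.1.1 p.1.2) (Ψ₂ p.1.1 p.1.2)) ∧
  (∀ p : {q : (Fin n × α) × (Fin n × α) // q.1.1 ≠ q.2.1},
    tens (Ψ₁ p.1.1 p.1.2) (Ψ₂ p.1.1 p.1.2) ∈ (bigHole n α)ᗮ) ∧
  Submodule.span ℂ (Set.range fun p : {q : (Fin n × α) × (Fin n × α) // q.1.1 ≠ q.2.1} =>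
    tens (Ψ₁ p.1.1 p.1.2) (Ψ₂ p.1.1 p.1.2)) = (bigHole n α)ᗮ

/-- A PIQLS is self-orthogonal (an HSOQLS) if the vectors `Ψ_{r,c} ⊗ conj (Ψ_{c,r})`
over all filled cells form an orthonormal basis of `(ℂ^D ⊗ ℂ^D) ⊖ ⊕_s (V_s ⊗ V_s)`. -/
def SelfOrthPIQLS {n : ℕ} {α : Type*} [Fintype α] [DecidableEq α]
    (Ψ : (Fin n × α) → (Fin n × α) → EuclideanSpace ℂ (Fin n × α)) : Prop :=
  Orthonormal ℂ (fun p : {q : (Fin n × α) × (Fin n × α) // q.1.1 ≠ q.2.1} =>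
    tens (Ψ p.1.1 p.1.2) (conjE (Ψ p.1.2 p.1.1))) ∧
  (∀ p : {q : (Fin n × α) × (Fin n × α) // q.1.1 ≠ q.2.1},
    tens (Ψ p.1.1 p.1.2) (conjE (Ψ p.1.2 p.1.1)) ∈ (bigHole n α)ᗮ) ∧
  Submodule.span ℂ (Set.range fun p : {q : (Fin n × α) × (Fin n × α) // q.1.1 ≠ q.2.1} =>
    tens (Ψ p.1.1 p.1.2) (conjE (Ψ p.1.2 p.1.1))) = (bigHole n α)ᗮ

/-- A quantum Latin square over index set `ι` with values in `E`. -/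
def IsQLSOn {ι : Type*} {E : Type*} [NormedAddCommGroup E] [InnerProductSpace ℂ E]
    (Φ : ι → ι → E) : Prop :=
  (∀ i, Orthonormal ℂ (Φ i)) ∧ (∀ j, Orthonormal ℂ (fun i => Φ i j))

/-- Orthogonality of two quantum Latin squares. -/
def OrthQLSOn {ι : Type*} [DecidableEq ι] {E : Type*} [NormedAddCommGroup E]
    [InnerProductSpace ℂ E] (Φ Ψ : ι → ι → E) : Prop :=
  ∀ i j i' j', ip (Φ i j) (Φ i' j') * ip (Ψ i j) (Ψ i' j') =
    if i = i' ∧ j = j' then 1 else 0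


set_option linter.unusedSectionVars false

open Module

/-- Mixed tensor `ℂ^{a×b} ⊗ ℂ^c ≃ ℂ^{a × (b × c)}`. -/
def mix {a b c : Type*} [Fintype a] [Fintype b] [Fintype c]
    (u : EuclideanSpace ℂ (a × b)) (v : EuclideanSpace ℂ c) :
    EuclideanSpace ℂ (a × (b × c)) :=
  WithLp.toLp 2 (fun p : a × (b × c) => u (p.1, p.2.1) * v p.2.2)

lemma inner_tens_factor {a b : Type*} [Fintype a] [Fintype b]
    (u u' : EuclideanSpace ℂ a) (v v' : EuclideanSpace ℂ b) :
    inner (𝕜 := ℂ) (tens u v) (tens u' v') = inner (𝕜 := ℂ) u u' * inner (𝕜 := ℂ) v v' := by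
  classical
  simp only [PiLp.inner_apply, RCLike.inner_apply, tens]
  rw [Finset.sum_mul_sum, Fintype.sum_prod_type]
  congr 1; ext i; congr 1; ext j
  simp; ring

lemma inner_mix_factor {a b c : Type*} [Fintype a] [Fintype b] [Fintype c]
    (u u' : EuclideanSpace ℂ (a × b)) (v v' : EuclideanSpace ℂ c) :
    inner (𝕜 := ℂ) (mix u v) (mix u' v') = inner (𝕜 := ℂ) u u' * inner (𝕜 := ℂ) v v' := by
  have h : inner (𝕜 := ℂ) (mix u v) (mix u' v') = inner (𝕜 := ℂ) (tens u v) (tens u' v') := by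
    simp only [PiLp.inner_apply, RCLike.inner_apply, mix, tens]
    exact Fintype.sum_equiv (Equiv.prodAssoc a b c).symm _ _ (fun p => rfl)
  rw [h, inner_tens_factor]

lemma mem_orthogonal_span_range_iff {ι E : Type*} [NormedAddCommGroup E] [InnerProductSpace ℂ E]
    (f : ι → E) (v : E) :
    v ∈ (Submodule.span ℂ (Set.range f))ᗮ ↔ ∀ i, inner ℂ (f i) v = (0 : ℂ) := by
  rw [Submodule.mem_orthogonal]
  constructor
  · exact fun h i => h _ (Submodule.subset_span ⟨i, rfl⟩)
  · intro h u hu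
    induction hu using Submodule.span_induction with
    | mem x hx => obtain ⟨i, rfl⟩ := hx; exact h i
    | zero => simp
    | add x y _ _ hx hy => simp [inner_add_left, hx, hy]
    | smul c x _ hx => simp [inner_smul_left, hx]

lemma span_eq_of_orthonormal_card {ι E : Type*} [Fintype ι] [NormedAddCommGroup E]
    [InnerProductSpace ℂ E] [FiniteDimensional ℂ E] {f : ι → E} (hf : Orthonormal ℂ f)
    {W : Submodule ℂ E} (hmem : ∀ i, f i ∈ W)
    (hcard : Module.finrank ℂ W = Fintype.card ι) :
    Submodule.span ℂ (Set.range f) = W := by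
  apply Submodule.eq_of_le_of_finrank_le
  · rw [Submodule.span_le]; rintro x ⟨i, rfl⟩; exact hmem i
  · rw [hcard, finrank_span_eq_card hf.linearIndependent]

variable {n : ℕ} {α : Type*} [Fintype α] [DecidableEq α]

lemma mem_holeSub_orth_iff (s : Fin n) (v : EuclideanSpace ℂ (Fin n × α)) :
    v ∈ (holeSub n α s)ᗮ ↔ ∀ x : α, v (s, x) = 0 := by
  have := mem_orthogonal_span_range_iff (fun x : α => EuclideanSpace.single ((s, x)) (1 : ℂ)) v
  simpa [holeSub, EuclideanSpace.inner_single_left] using this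

lemma mem_bigHole_orth_iff (v : EuclideanSpace ℂ ((Fin n × α) × (Fin n × α))) :
    v ∈ (bigHole n α)ᗮ ↔ ∀ z : Fin n × α × α, v ((z.1, z.2.1), (z.1, z.2.2)) = 0 := by
  have := mem_orthogonal_span_range_iff (fun z : Fin n × α × α =>
    EuclideanSpace.single (((z.1, z.2.1), (z.1, z.2.2))) (1 : ℂ)) v
  simpa [bigHole, EuclideanSpace.inner_single_left] using this

lemma orthonormal_single_comp {ι κ : Type*} [Fintype ι] [DecidableEq ι] {g : κ → ι}
    (hg : Function.Injective g) :
    Orthonormal ℂ (fun k => EuclideanSpace.single (g k) (1 : ℂ)) := by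
  have := (EuclideanSpace.basisFun ι ℂ).orthonormal.comp g hg
  have e : (fun k => EuclideanSpace.single (g k) (1 : ℂ)) = ⇑(EuclideanSpace.basisFun ι ℂ) ∘ g := by
    funext k; simp [EuclideanSpace.basisFun_apply]
  rw [e]; exact this

lemma finrank_holeSub (s : Fin n) : finrank ℂ (holeSub n α s) = Fintype.card α := by
  have hg : Function.Injective (fun x : α => ((s, x) : Fin n × α)) := by
    intro x y hxy; simpa [Prod.ext_iff] using hxy
  have := finrank_span_eq_card (orthonormal_single_comp hg).linearIndependent
  rw [holeSub]
  convert this using 6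

lemma finrank_holeSub_orth (s : Fin n) :
    finrank ℂ ((holeSub n α s)ᗮ) = n * Fintype.card α - Fintype.card α := by
  have h1 := Submodule.finrank_add_finrank_orthogonal (holeSub n α s)
  rw [finrank_holeSub] at h1
  have h2 : finrank ℂ (EuclideanSpace ℂ (Fin n × α)) = n * Fintype.card α := by
    simp [finrank_euclideanSpace]
  omega

lemma card_row_subtype (s : Fin n) :
    Fintype.card {c : Fin n × α // c.1 ≠ s} = n * Fintype.card α - Fintype.card α := by
  classical
  have h1 : Fintype.card {c : Fin n × α // c.1 = s} = Fintype.card α := by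
    refine Fintype.card_congr ⟨fun c => c.1.2, fun x => ⟨(s, x), rfl⟩, ?_, fun x => rfl⟩
    rintro ⟨⟨t, x⟩, rfl⟩; rfl
  have := Fintype.card_subtype_compl (fun c : Fin n × α => c.1 = s)
  simp only [h1, Fintype.card_prod, Fintype.card_fin] at this
  exact this

lemma finrank_bigHole : finrank ℂ (bigHole n α) = n * (Fintype.card α * Fintype.card α) := by
  have hg : Function.Injective (fun z : Fin n × α × α =>
      (((z.1, z.2.1), (z.1, z.2.2)) : (Fin n × α) × (Fin n × α))) := by
    intro z z' hz
    simp only [Prod.ext_iff] at hz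
    exact Prod.ext hz.1.1 (Prod.ext hz.1.2 hz.2.2)
  have := finrank_span_eq_card (orthonormal_single_comp hg).linearIndependent
  rw [bigHole]
  convert this using 6
  simp

lemma finrank_bigHole_orth :
    finrank ℂ ((bigHole n α)ᗮ) =
      (n * Fintype.card α) * (n * Fintype.card α) - n * (Fintype.card α * Fintype.card α) := by
  have h1 := Submodule.finrank_add_finrank_orthogonal (bigHole n α)
  rw [finrank_bigHole] at h1
  have h2 : finrank ℂ (EuclideanSpace ℂ ((Fin n × α) × (Fin n × α)))
      = (n * Fintype.card α) * (n * Fintype.card α) := by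
    simp [finrank_euclideanSpace]
  omega

lemma card_pair_subtype :
    Fintype.card {q : (Fin n × α) × (Fin n × α) // q.1.1 ≠ q.2.1} =
      (n * Fintype.card α) * (n * Fintype.card α) - n * (Fintype.card α * Fintype.card α) := by
  classical
  have h1 : Fintype.card {q : (Fin n × α) × (Fin n × α) // q.1.1 = q.2.1}
      = n * (Fintype.card α * Fintype.card α) := by
    have e : {q : (Fin n × α) × (Fin n × α) // q.1.1 = q.2.1} ≃ Fin n × α × α :=
      ⟨fun q => (q.1.1.1, q.1.1.2, q.1.2.2),
       fun z => ⟨((z.1, z.2.1), (z.1, z.2.2)), rfl⟩,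
       by rintro ⟨⟨⟨t, x⟩, ⟨u, y⟩⟩, h⟩; simp only [] at h; subst h; rfl,
       fun z => rfl⟩
    simp [Fintype.card_congr e]
  have := Fintype.card_subtype_compl (fun q : (Fin n × α) × (Fin n × α) => q.1.1 = q.2.1)
  simp only [h1, Fintype.card_prod, Fintype.card_fin] at this
  rw [this]

lemma mul_mul_ite {a b c d : ℂ} {P Q R : Prop} [Decidable P] [Decidable Q] [Decidable R]
    (h1 : a * c = if P then 1 else 0) (h2 : b * d = if Q then 1 else 0)
    (hR : R ↔ (P ∧ Q)) : a * b * (c * d) = if R then 1 else 0 := by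
  have h : a * b * (c * d) = a * c * (b * d) := by ring
  rw [h, h1, h2]
  split_ifs <;> simp_all

lemma rows_piqls {n h m : ℕ}
    {Ψ : (Fin n × Fin h) → (Fin n × Fin h) → EuclideanSpace ℂ (Fin n × Fin h)}
    {Φ : Fin m → Fin m → EuclideanSpace ℂ (Fin m)}
    (hΨ : ∀ r : Fin n × Fin h,
      Orthonormal ℂ (fun c : {c : Fin n × Fin h // c.1 ≠ r.1} => Ψ r c) ∧
      (∀ c : Fin n × Fin h, c.1 ≠ r.1 → Ψ r c ∈ (holeSub n (Fin h) r.1)ᗮ) ∧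
      Submodule.span ℂ (Set.range fun c : {c : Fin n × Fin h // c.1 ≠ r.1} => Ψ r c) =
        (holeSub n (Fin h) r.1)ᗮ)
    (hΦ : ∀ i, Orthonormal ℂ (Φ i)) (r : Fin n × (Fin h × Fin m)) :
    Orthonormal ℂ (fun c : {c : Fin n × (Fin h × Fin m) // c.1 ≠ r.1} =>
      mix (Ψ (r.1, r.2.1) ((c : Fin n × (Fin h × Fin m)).1, (c : Fin n × (Fin h × Fin m)).2.1))
        (Φ r.2.2 (c : Fin n × (Fin h × Fin m)).2.2)) ∧
    (∀ c : Fin n × (Fin h × Fin m), c.1 ≠ r.1 →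
      mix (Ψ (r.1, r.2.1) (c.1, c.2.1)) (Φ r.2.2 c.2.2) ∈ (holeSub n (Fin h × Fin m) r.1)ᗮ) ∧
    Submodule.span ℂ (Set.range fun c : {c : Fin n × (Fin h × Fin m) // c.1 ≠ r.1} =>
      mix (Ψ (r.1, r.2.1) ((c : Fin n × (Fin h × Fin m)).1, (c : Fin n × (Fin h × Fin m)).2.1))
        (Φ r.2.2 (c : Fin n × (Fin h × Fin m)).2.2)) =
      (holeSub n (Fin h × Fin m) r.1)ᗮ := by
  classical
  obtain ⟨ho, hv, hs⟩ := hΨ (r.1, r.2.1)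
  have ha : Orthonormal ℂ (fun c : {c : Fin n × (Fin h × Fin m) // c.1 ≠ r.1} =>
      mix (Ψ (r.1, r.2.1) ((c : Fin n × (Fin h × Fin m)).1, (c : Fin n × (Fin h × Fin m)).2.1))
        (Φ r.2.2 (c : Fin n × (Fin h × Fin m)).2.2)) := by
    rw [orthonormal_iff_ite]
    intro c c'
    rw [inner_mix_factor]
    have h1 : inner (𝕜 := ℂ) (Ψ (r.1, r.2.1) (c.1.1, c.1.2.1)) (Ψ (r.1, r.2.1) (c'.1.1, c'.1.2.1))
        = if (⟨(c.1.1, c.1.2.1), c.2⟩ : {c : Fin n × Fin h // c.1 ≠ r.1})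
            = ⟨(c'.1.1, c'.1.2.1), c'.2⟩ then 1 else 0 :=
      orthonormal_iff_ite.mp ho ⟨(c.1.1, c.1.2.1), c.2⟩ ⟨(c'.1.1, c'.1.2.1), c'.2⟩
    have h2 : inner (𝕜 := ℂ) (Φ r.2.2 c.1.2.2) (Φ r.2.2 c'.1.2.2)
        = if c.1.2.2 = c'.1.2.2 then 1 else 0 :=
      orthonormal_iff_ite.mp (hΦ r.2.2) c.1.2.2 c'.1.2.2
    rw [h1, h2]
    have hiff : ((⟨(c.1.1, c.1.2.1), c.2⟩ : {c : Fin n × Fin h // c.1 ≠ r.1})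
        = ⟨(c'.1.1, c'.1.2.1), c'.2⟩ ∧ c.1.2.2 = c'.1.2.2) ↔ c = c' := by
      simp only [Subtype.ext_iff, Prod.ext_iff]
      tauto
    split_ifs with hP hQ hQ <;> simp_all
  have hb : ∀ c : Fin n × (Fin h × Fin m), c.1 ≠ r.1 →
      mix (Ψ (r.1, r.2.1) (c.1, c.2.1)) (Φ r.2.2 c.2.2) ∈ (holeSub n (Fin h × Fin m) r.1)ᗮ := by
    intro c hc
    rw [mem_holeSub_orth_iff]
    intro x
    have h0 : Ψ (r.1, r.2.1) (c.1, c.2.1) (r.1, x.1) = 0 :=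
      (mem_holeSub_orth_iff _ _).mp (hv (c.1, c.2.1) hc) x.1
    show Ψ (r.1, r.2.1) (c.1, c.2.1) (r.1, x.1) * Φ r.2.2 c.2.2 x.2 = 0
    rw [h0, zero_mul]
  refine ⟨ha, hb, ?_⟩
  apply span_eq_of_orthonormal_card ha (fun c => hb c.1 c.2)
  rw [finrank_holeSub_orth, card_row_subtype]

set_option maxHeartbeats 1000000 in
lemma orth_prod {n h m : ℕ}
    {Ψ₁ Ψ₂ : (Fin n × Fin h) → (Fin n × Fin h) → EuclideanSpace ℂ (Fin n × Fin h)}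
    {Φ₁ Φ₂ : Fin m → Fin m → EuclideanSpace ℂ (Fin m)}
    (hΨo : OrthPIQLS Ψ₁ Ψ₂) (hΦo : OrthQLSOn Φ₁ Φ₂) :
    OrthPIQLS (n := n) (α := Fin h × Fin m)
      (fun r c => mix (Ψ₁ (r.1, r.2.1) (c.1, c.2.1)) (Φ₁ r.2.2 c.2.2))
      (fun r c => mix (Ψ₂ (r.1, r.2.1) (c.1, c.2.1)) (Φ₂ r.2.2 c.2.2)) := by
  classical
  obtain ⟨hoo, hvv, hss⟩ := hΨo
  have ha : Orthonormal ℂ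
      (fun p : {q : (Fin n × (Fin h × Fin m)) × (Fin n × (Fin h × Fin m)) // q.1.1 ≠ q.2.1} =>
        tens (mix (Ψ₁ (p.1.1.1, p.1.1.2.1) (p.1.2.1, p.1.2.2.1)) (Φ₁ p.1.1.2.2 p.1.2.2.2))
             (mix (Ψ₂ (p.1.1.1, p.1.1.2.1) (p.1.2.1, p.1.2.2.1)) (Φ₂ p.1.1.2.2 p.1.2.2.2))) := by
    rw [orthonormal_iff_ite]
    intro p p'
    rw [inner_tens_factor, inner_mix_factor, inner_mix_factor]
    have h1 := orthonormal_iff_ite.mp hoo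
      ⟨((p.1.1.1, p.1.1.2.1), (p.1.2.1, p.1.2.2.1)), p.2⟩
      ⟨((p'.1.1.1, p'.1.1.2.1), (p'.1.2.1, p'.1.2.2.1)), p'.2⟩
    rw [inner_tens_factor] at h1
    have h2 : inner (𝕜 := ℂ) (Φ₁ p.1.1.2.2 p.1.2.2.2) (Φ₁ p'.1.1.2.2 p'.1.2.2.2)
        * inner (𝕜 := ℂ) (Φ₂ p.1.1.2.2 p.1.2.2.2) (Φ₂ p'.1.1.2.2 p'.1.2.2.2)
        = if p.1.1.2.2 = p'.1.1.2.2 ∧ p.1.2.2.2 = p'.1.2.2.2 then 1 else 0 :=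
      hΦo p.1.1.2.2 p.1.2.2.2 p'.1.1.2.2 p'.1.2.2.2
    have hiff : p = p' ↔ (((⟨((p.1.1.1, p.1.1.2.1), (p.1.2.1, p.1.2.2.1)), p.2⟩ :
          {q : (Fin n × Fin h) × (Fin n × Fin h) // q.1.1 ≠ q.2.1})
        = ⟨((p'.1.1.1, p'.1.1.2.1), (p'.1.2.1, p'.1.2.2.1)), p'.2⟩)
        ∧ (p.1.1.2.2 = p'.1.1.2.2 ∧ p.1.2.2.2 = p'.1.2.2.2)) := by
      simp only [Subtype.ext_iff, Prod.ext_iff]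
      tauto
    exact mul_mul_ite h1 h2 hiff
  have hb : ∀ p : {q : (Fin n × (Fin h × Fin m)) × (Fin n × (Fin h × Fin m)) // q.1.1 ≠ q.2.1},
      tens (mix (Ψ₁ (p.1.1.1, p.1.1.2.1) (p.1.2.1, p.1.2.2.1)) (Φ₁ p.1.1.2.2 p.1.2.2.2))
           (mix (Ψ₂ (p.1.1.1, p.1.1.2.1) (p.1.2.1, p.1.2.2.1)) (Φ₂ p.1.1.2.2 p.1.2.2.2))
        ∈ (bigHole n (Fin h × Fin m))ᗮ := by
    intro p
    rw [mem_bigHole_orth_iff]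
    intro z
    have h0 : Ψ₁ (p.1.1.1, p.1.1.2.1) (p.1.2.1, p.1.2.2.1) (z.1, z.2.1.1)
        * Ψ₂ (p.1.1.1, p.1.1.2.1) (p.1.2.1, p.1.2.2.1) (z.1, z.2.2.1) = 0 :=
      (mem_bigHole_orth_iff _).mp
        (hvv ⟨((p.1.1.1, p.1.1.2.1), (p.1.2.1, p.1.2.2.1)), p.2⟩) (z.1, (z.2.1.1, z.2.2.1))
    show (Ψ₁ (p.1.1.1, p.1.1.2.1) (p.1.2.1, p.1.2.2.1) (z.1, z.2.1.1)
          * Φ₁ p.1.1.2.2 p.1.2.2.2 z.2.1.2)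
        * (Ψ₂ (p.1.1.1, p.1.1.2.1) (p.1.2.1, p.1.2.2.1) (z.1, z.2.2.1)
          * Φ₂ p.1.1.2.2 p.1.2.2.2 z.2.2.2) = 0
    calc _ = (Ψ₁ (p.1.1.1, p.1.1.2.1) (p.1.2.1, p.1.2.2.1) (z.1, z.2.1.1)
          * Ψ₂ (p.1.1.1, p.1.1.2.1) (p.1.2.1, p.1.2.2.1) (z.1, z.2.2.1))
          * (Φ₁ p.1.1.2.2 p.1.2.2.2 z.2.1.2 * Φ₂ p.1.1.2.2 p.1.2.2.2 z.2.2.2) := by ring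
      _ = 0 := by rw [h0, zero_mul]
  refine ⟨ha, hb, ?_⟩
  apply span_eq_of_orthonormal_card ha hb
  rw [finrank_bigHole_orth, card_pair_subtype]

/-- Weighting construction: if `Ψ¹, Ψ²` is a pair of orthogonal PIQLSs of type `hⁿ`
and `Φ¹, Φ²` is a pair of orthogonal quantum Latin squares of dimension `m`, then the
arrays with entries `Ψ¹_{i,j} ⊗ Φ¹_{l,k}` and `Ψ²_{i,j} ⊗ Φ²_{l,k}` form a pair of
orthogonal PIQLSs of type `(hm)ⁿ`, with holes `V_s ⊗ ℂ^m`. -/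
theorem weighting_orth_piqls {n h m : ℕ}
    (Ψ₁ Ψ₂ : (Fin n × Fin h) → (Fin n × Fin h) → EuclideanSpace ℂ (Fin n × Fin h))
    (hΨ₁ : IsPIQLS Ψ₁) (hΨ₂ : IsPIQLS Ψ₂) (hΨo : OrthPIQLS Ψ₁ Ψ₂)
    (Φ₁ Φ₂ : Fin m → Fin m → EuclideanSpace ℂ (Fin m))
    (hΦ₁ : IsQLSOn Φ₁) (hΦ₂ : IsQLSOn Φ₂) (hΦo : OrthQLSOn Φ₁ Φ₂) :
    IsPIQLS (n := n) (α := Fin h × Fin m)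
      (fun r c => WithLp.toLp 2 fun p : Fin n × (Fin h × Fin m) =>
        Ψ₁ (r.1, r.2.1) (c.1, c.2.1) (p.1, p.2.1) * Φ₁ r.2.2 c.2.2 p.2.2) ∧
    IsPIQLS (n := n) (α := Fin h × Fin m)
      (fun r c => WithLp.toLp 2 fun p : Fin n × (Fin h × Fin m) =>
        Ψ₂ (r.1, r.2.1) (c.1, c.2.1) (p.1, p.2.1) * Φ₂ r.2.2 c.2.2 p.2.2) ∧
    OrthPIQLS (n := n) (α := Fin h × Fin m)
      (fun r c => WithLp.toLp 2 fun p : Fin n × (Fin h × Fin m) =>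
        Ψ₁ (r.1, r.2.1) (c.1, c.2.1) (p.1, p.2.1) * Φ₁ r.2.2 c.2.2 p.2.2)
      (fun r c => WithLp.toLp 2 fun p : Fin n × (Fin h × Fin m) =>
        Ψ₂ (r.1, r.2.1) (c.1, c.2.1) (p.1, p.2.1) * Φ₂ r.2.2 c.2.2 p.2.2) := by
  
  refine ⟨⟨fun r => rows_piqls hΨ₁.1 hΦ₁.1 r,
           fun c => rows_piqls (Ψ := fun a b => Ψ₁ b a) (Φ := fun i j => Φ₁ j i) hΨ₁.2 hΦ₁.2 c⟩,
          ⟨fun r => rows_piqls hΨ₂.1 hΦ₂.1 r,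
           fun c => rows_piqls (Ψ := fun a b => Ψ₂ b a) (Φ := fun i j => Φ₂ j i) hΨ₂.2 hΦ₂.2 c⟩,
          orth_prod hΨo hΦo⟩
end
end

section
/- Let L¹,L²,L³ be three mutually orthogonal Latin cubes of order d₁ with property (B), and K¹,K²,K³ three mutually orthogonal Latin cubes of order d₂ with property (B). Then the cubes of dimension d₁d₂ with entries |Lˢ(i,j,k)⟩ ⊗ |Kˢ(f,g,h)⟩ (standard basis vectors in ℂ^{d₁} ⊗ ℂ^{d₂}), for s = 1,2,3, form a triple of orthogonal quantum Latin cubes of dimension d₁d₂. -/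
noncomputable section

/-- A quantum Latin cube over index set `ι` with values in the Hilbert space `E`:
every line (fixing two of the three indices) is an orthonormal basis. -/
def IsQLCOn {ι : Type*} {E : Type*} [NormedAddCommGroup E] [InnerProductSpace ℂ E]
    (Φ : ι → ι → ι → E) : Prop :=
  (∀ j k, Orthonormal ℂ fun i => Φ i j k) ∧
  (∀ i k, Orthonormal ℂ fun j => Φ i j k) ∧
  (∀ i j, Orthonormal ℂ (Φ i j))

/-- For each fixed value of one of the three indices, the corresponding planes of the
two cubes form a pair of orthogonal quantum Latin squares. -/
def PlanesOrth {ι : Type*} [DecidableEq ι] {E : Type*} [NormedAddCommGroup E]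
    [InnerProductSpace ℂ E] (Φ Ψ : ι → ι → ι → E) : Prop :=
  (∀ i, ∀ j k j' k', ip (Φ i j k) (Φ i j' k') * ip (Ψ i j k) (Ψ i j' k') =
    if j = j' ∧ k = k' then 1 else 0) ∧
  (∀ j, ∀ i k i' k', ip (Φ i j k) (Φ i' j k') * ip (Ψ i j k) (Ψ i' j k') =
    if i = i' ∧ k = k' then 1 else 0) ∧
  (∀ k, ∀ i j i' j', ip (Φ i j k) (Φ i' j' k) * ip (Ψ i j k) (Ψ i' j' k) =
    if i = i' ∧ j = j' then 1 else 0)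

/-- Three quantum Latin cubes are orthogonal: (1) the triple tensor products over all
cells form an orthonormal basis of `E ⊗ E ⊗ E`, expressed via
`⟨Φ,Φ'⟩⟨Ψ,Ψ'⟩⟨Υ,Υ'⟩ = δ_{ii'}δ_{jj'}δ_{kk'}`; and (2) every pair of corresponding
planes of any two of the cubes is a pair of orthogonal quantum Latin squares. -/
def TripleOrthQLC {ι : Type*} [DecidableEq ι] {E : Type*} [NormedAddCommGroup E]
    [InnerProductSpace ℂ E] (Φ Ψ Υ : ι → ι → ι → E) : Prop :=
  (∀ i j k i' j' k',
    ip (Φ i j k) (Φ i' j' k') * ip (Ψ i j k) (Ψ i' j' k') * ip (Υ i j k) (Υ i' j' k') =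
      if i = i' ∧ j = j' ∧ k = k' then 1 else 0) ∧
  PlanesOrth Φ Ψ ∧ PlanesOrth Φ Υ ∧ PlanesOrth Ψ Υ

/-- A (classical) Latin cube of order `d`: fixing any two of the three coordinates
gives a bijection in the remaining one. -/
def IsLatinCube {d : ℕ} (L : Fin d → Fin d → Fin d → Fin d) : Prop :=
  (∀ j k, Function.Bijective fun i => L i j k) ∧
  (∀ i k, Function.Bijective fun j => L i j k) ∧
  (∀ i j, Function.Bijective (L i j))

/-- Three Latin cubes are orthogonal: their superposition is a bijection of `[d]³`. -/
def TripleOrthLC {d : ℕ} (L L' L'' : Fin d → Fin d → Fin d → Fin d) : Prop :=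
  Function.Bijective fun p : Fin d × Fin d × Fin d =>
    (L p.1 p.2.1 p.2.2, L' p.1 p.2.1 p.2.2, L'' p.1 p.2.1 p.2.2)

/-- Property (B) for a pair of Latin cubes: every pair of corresponding planes
(obtained by fixing one coordinate) forms a pair of orthogonal Latin squares. -/
def PlanesOrthLC {d : ℕ} (L L' : Fin d → Fin d → Fin d → Fin d) : Prop :=
  (∀ i, Function.Bijective fun p : Fin d × Fin d => (L i p.1 p.2, L' i p.1 p.2)) ∧
  (∀ j, Function.Bijective fun p : Fin d × Fin d => (L p.1 j p.2, L' p.1 j p.2)) ∧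
  (∀ k, Function.Bijective fun p : Fin d × Fin d => (L p.1 p.2 k, L' p.1 p.2 k))

lemma tens_single {a b : Type*} [Fintype a] [Fintype b] [DecidableEq a] [DecidableEq b]
    (x : a) (u : b) :
    tens (EuclideanSpace.single x (1:ℂ)) (EuclideanSpace.single u (1:ℂ)) =
      EuclideanSpace.single (x, u) (1:ℂ) := by
  ext p
  by_cases h1 : p.1 = x <;> by_cases h2 : p.2 = u <;>
    simp [tens, EuclideanSpace.single_apply, Prod.ext_iff, h1, h2]

lemma ip_tens {a b : Type*} [Fintype a] [Fintype b] [DecidableEq a] [DecidableEq b]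
    (x y : a) (u v : b) :
    ip (tens (EuclideanSpace.single x (1:ℂ)) (EuclideanSpace.single u (1:ℂ)))
       (tens (EuclideanSpace.single y (1:ℂ)) (EuclideanSpace.single v (1:ℂ))) =
      if x = y ∧ u = v then 1 else 0 := by
  rw [tens_single, tens_single, show (ip (EuclideanSpace.single (x,u) (1:ℂ))
      (EuclideanSpace.single (y,v) (1:ℂ))) = inner ℂ (EuclideanSpace.single (x,u) (1:ℂ))
      (EuclideanSpace.single (y,v) (1:ℂ)) from rfl, EuclideanSpace.inner_single_left]
  simp [EuclideanSpace.single_apply, Prod.ext_iff]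

lemma ite_one_mul_ite (P Q : Prop) [Decidable P] [Decidable Q] :
    (if P then (1:ℂ) else 0) * (if Q then 1 else 0) = if P ∧ Q then 1 else 0 := by
  by_cases h : P <;> by_cases h' : Q <;> simp [h, h']

lemma qlc_line {d₁ d₂ : ℕ} (f : Fin d₁ → Fin d₁) (g : Fin d₂ → Fin d₂)
    (hf : Function.Injective f) (hg : Function.Injective g) :
    Orthonormal ℂ fun i : Fin d₁ × Fin d₂ =>
      tens (EuclideanSpace.single (f i.1) (1:ℂ)) (EuclideanSpace.single (g i.2) (1:ℂ)) := by
  rw [orthonormal_iff_ite]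
  intro x y
  rw [show (inner ℂ (tens (EuclideanSpace.single (f x.1) (1:ℂ))
      (EuclideanSpace.single (g x.2) (1:ℂ)))
      (tens (EuclideanSpace.single (f y.1) (1:ℂ))
      (EuclideanSpace.single (g y.2) (1:ℂ))) : ℂ) = ip _ _ from rfl, ip_tens]
  simp [hf.eq_iff, hg.eq_iff, Prod.ext_iff]

lemma plane_delta {d₁ d₂ : ℕ} (A B : Fin d₁ → Fin d₁ → Fin d₁) (C D : Fin d₂ → Fin d₂ → Fin d₂)
    (hAB : Function.Injective fun p : Fin d₁ × Fin d₁ => (A p.1 p.2, B p.1 p.2))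
    (hCD : Function.Injective fun p : Fin d₂ × Fin d₂ => (C p.1 p.2, D p.1 p.2))
    (j k j' k' : Fin d₁ × Fin d₂) :
    (if A j.1 k.1 = A j'.1 k'.1 ∧ C j.2 k.2 = C j'.2 k'.2 then (1:ℂ) else 0) *
    (if B j.1 k.1 = B j'.1 k'.1 ∧ D j.2 k.2 = D j'.2 k'.2 then 1 else 0) =
    if j = j' ∧ k = k' then 1 else 0 := by
  rw [ite_one_mul_ite]
  refine if_congr ?_ rfl rfl
  constructor
  · rintro ⟨⟨h1, h2⟩, h3, h4⟩
    have e1 : (j.1, k.1) = (j'.1, k'.1) := hAB (by simp [h1, h3])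
    have e2 : (j.2, k.2) = (j'.2, k'.2) := hCD (by simp [h2, h4])
    simp only [Prod.mk.injEq] at e1 e2
    exact ⟨Prod.ext_iff.mpr ⟨e1.1, e2.1⟩, Prod.ext_iff.mpr ⟨e1.2, e2.2⟩⟩
  · rintro ⟨h1, h2⟩
    simp [h1, h2]

lemma triple_delta {d₁ d₂ : ℕ} {A B C : Fin d₁ → Fin d₁ → Fin d₁ → Fin d₁}
    {E F G : Fin d₂ → Fin d₂ → Fin d₂ → Fin d₂}
    (hL : Function.Injective fun p : Fin d₁ × Fin d₁ × Fin d₁ =>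
      (A p.1 p.2.1 p.2.2, B p.1 p.2.1 p.2.2, C p.1 p.2.1 p.2.2))
    (hK : Function.Injective fun p : Fin d₂ × Fin d₂ × Fin d₂ =>
      (E p.1 p.2.1 p.2.2, F p.1 p.2.1 p.2.2, G p.1 p.2.1 p.2.2))
    (i j k i' j' k' : Fin d₁ × Fin d₂) :
    (if A i.1 j.1 k.1 = A i'.1 j'.1 k'.1 ∧ E i.2 j.2 k.2 = E i'.2 j'.2 k'.2
        then (1:ℂ) else 0) *
    (if B i.1 j.1 k.1 = B i'.1 j'.1 k'.1 ∧ F i.2 j.2 k.2 = F i'.2 j'.2 k'.2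
        then 1 else 0) *
    (if C i.1 j.1 k.1 = C i'.1 j'.1 k'.1 ∧ G i.2 j.2 k.2 = G i'.2 j'.2 k'.2
        then 1 else 0) =
    if i = i' ∧ j = j' ∧ k = k' then 1 else 0 := by
  rw [ite_one_mul_ite, ite_one_mul_ite]
  refine if_congr ?_ rfl rfl
  constructor
  · rintro ⟨⟨⟨h1, h2⟩, h3, h4⟩, h5, h6⟩
    have e1 : (i.1, j.1, k.1) = (i'.1, j'.1, k'.1) := hL (by simp [h1, h3, h5])
    have e2 : (i.2, j.2, k.2) = (i'.2, j'.2, k'.2) := hK (by simp [h2, h4, h6])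
    simp only [Prod.mk.injEq] at e1 e2
    exact ⟨Prod.ext_iff.mpr ⟨e1.1, e2.1⟩, Prod.ext_iff.mpr ⟨e1.2.1, e2.2.1⟩,
      Prod.ext_iff.mpr ⟨e1.2.2, e2.2.2⟩⟩
  · rintro ⟨h1, h2, h3⟩
    simp [h1, h2, h3]

set_option maxHeartbeats 1000000 in
/-- Direct product construction for quantum Latin cubes: from two triples of mutually
orthogonal Latin cubes of orders `d₁` and `d₂`, each with property (B), the cubes of
dimension `d₁d₂` with entries `|Lˢ(i,j,k)⟩ ⊗ |Kˢ(f,g,h)⟩` form a triple of orthogonal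
quantum Latin cubes of dimension `d₁d₂`. -/
theorem molc_product_quantum {d₁ d₂ : ℕ}
    (L₁ L₂ L₃ : Fin d₁ → Fin d₁ → Fin d₁ → Fin d₁)
    (K₁ K₂ K₃ : Fin d₂ → Fin d₂ → Fin d₂ → Fin d₂)
    (hL : IsLatinCube L₁ ∧ IsLatinCube L₂ ∧ IsLatinCube L₃)
    (hK : IsLatinCube K₁ ∧ IsLatinCube K₂ ∧ IsLatinCube K₃)
    (hLo : TripleOrthLC L₁ L₂ L₃) (hKo : TripleOrthLC K₁ K₂ K₃)
    (hLB : PlanesOrthLC L₁ L₂ ∧ PlanesOrthLC L₁ L₃ ∧ PlanesOrthLC L₂ L₃)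
    (hKB : PlanesOrthLC K₁ K₂ ∧ PlanesOrthLC K₁ K₃ ∧ PlanesOrthLC K₂ K₃) :
    (IsQLCOn fun i j k : Fin d₁ × Fin d₂ =>
      tens (EuclideanSpace.single (L₁ i.1 j.1 k.1) (1 : ℂ))
        (EuclideanSpace.single (K₁ i.2 j.2 k.2) (1 : ℂ))) ∧
    (IsQLCOn fun i j k : Fin d₁ × Fin d₂ =>
      tens (EuclideanSpace.single (L₂ i.1 j.1 k.1) (1 : ℂ))
        (EuclideanSpace.single (K₂ i.2 j.2 k.2) (1 : ℂ))) ∧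
    (IsQLCOn fun i j k : Fin d₁ × Fin d₂ =>
      tens (EuclideanSpace.single (L₃ i.1 j.1 k.1) (1 : ℂ))
        (EuclideanSpace.single (K₃ i.2 j.2 k.2) (1 : ℂ))) ∧
    TripleOrthQLC
      (fun i j k : Fin d₁ × Fin d₂ =>
        tens (EuclideanSpace.single (L₁ i.1 j.1 k.1) (1 : ℂ))
          (EuclideanSpace.single (K₁ i.2 j.2 k.2) (1 : ℂ)))
      (fun i j k : Fin d₁ × Fin d₂ =>
        tens (EuclideanSpace.single (L₂ i.1 j.1 k.1) (1 : ℂ))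
          (EuclideanSpace.single (K₂ i.2 j.2 k.2) (1 : ℂ)))
      (fun i j k : Fin d₁ × Fin d₂ =>
        tens (EuclideanSpace.single (L₃ i.1 j.1 k.1) (1 : ℂ))
          (EuclideanSpace.single (K₃ i.2 j.2 k.2) (1 : ℂ))) := by
  refine ⟨⟨fun j k => qlc_line (fun x => L₁ x j.1 k.1) (fun y => K₁ y j.2 k.2) (hL.1.1 j.1 k.1).1 (hK.1.1 j.2 k.2).1,
      fun i k => qlc_line (fun x => L₁ i.1 x k.1) (fun y => K₁ i.2 y k.2) (hL.1.2.1 i.1 k.1).1 (hK.1.2.1 i.2 k.2).1,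
      fun i j => qlc_line (fun x => L₁ i.1 j.1 x) (fun y => K₁ i.2 j.2 y) (hL.1.2.2 i.1 j.1).1 (hK.1.2.2 i.2 j.2).1⟩,
    ⟨fun j k => qlc_line (fun x => L₂ x j.1 k.1) (fun y => K₂ y j.2 k.2) (hL.2.1.1 j.1 k.1).1 (hK.2.1.1 j.2 k.2).1,
      fun i k => qlc_line (fun x => L₂ i.1 x k.1) (fun y => K₂ i.2 y k.2) (hL.2.1.2.1 i.1 k.1).1 (hK.2.1.2.1 i.2 k.2).1,
      fun i j => qlc_line (fun x => L₂ i.1 j.1 x) (fun y => K₂ i.2 j.2 y) (hL.2.1.2.2 i.1 j.1).1 (hK.2.1.2.2 i.2 j.2).1⟩,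
    ⟨fun j k => qlc_line (fun x => L₃ x j.1 k.1) (fun y => K₃ y j.2 k.2) (hL.2.2.1 j.1 k.1).1 (hK.2.2.1 j.2 k.2).1,
      fun i k => qlc_line (fun x => L₃ i.1 x k.1) (fun y => K₃ i.2 y k.2) (hL.2.2.2.1 i.1 k.1).1 (hK.2.2.2.1 i.2 k.2).1,
      fun i j => qlc_line (fun x => L₃ i.1 j.1 x) (fun y => K₃ i.2 j.2 y) (hL.2.2.2.2 i.1 j.1).1 (hK.2.2.2.2 i.2 j.2).1⟩,
    ?_,
    ⟨?_, ?_, ?_⟩, ⟨?_, ?_, ?_⟩, ⟨?_, ?_, ?_⟩⟩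
  · intro i j k i' j' k'
    rw [ip_tens, ip_tens, ip_tens]
    exact triple_delta hLo.1 hKo.1 i j k i' j' k'
  · intro i j k j' k'
    rw [ip_tens, ip_tens]
    exact plane_delta (fun p q => L₁ i.1 p q) (fun p q => L₂ i.1 p q) (fun p q => K₁ i.2 p q) (fun p q => K₂ i.2 p q) (hLB.1.1 i.1).1 (hKB.1.1 i.2).1 j k j' k'
  · intro j i k i' k'
    rw [ip_tens, ip_tens]
    exact plane_delta (fun p q => L₁ p j.1 q) (fun p q => L₂ p j.1 q) (fun p q => K₁ p j.2 q) (fun p q => K₂ p j.2 q) (hLB.1.2.1 j.1).1 (hKB.1.2.1 j.2).1 i k i' k'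
  · intro k i j i' j'
    rw [ip_tens, ip_tens]
    exact plane_delta (fun p q => L₁ p q k.1) (fun p q => L₂ p q k.1) (fun p q => K₁ p q k.2) (fun p q => K₂ p q k.2) (hLB.1.2.2 k.1).1 (hKB.1.2.2 k.2).1 i j i' j'
  · intro i j k j' k'
    rw [ip_tens, ip_tens]
    exact plane_delta (fun p q => L₁ i.1 p q) (fun p q => L₃ i.1 p q) (fun p q => K₁ i.2 p q) (fun p q => K₃ i.2 p q) (hLB.2.1.1 i.1).1 (hKB.2.1.1 i.2).1 j k j' k'
  · intro j i k i' k'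
    rw [ip_tens, ip_tens]
    exact plane_delta (fun p q => L₁ p j.1 q) (fun p q => L₃ p j.1 q) (fun p q => K₁ p j.2 q) (fun p q => K₃ p j.2 q) (hLB.2.1.2.1 j.1).1 (hKB.2.1.2.1 j.2).1 i k i' k'
  · intro k i j i' j'
    rw [ip_tens, ip_tens]
    exact plane_delta (fun p q => L₁ p q k.1) (fun p q => L₃ p q k.1) (fun p q => K₁ p q k.2) (fun p q => K₃ p q k.2) (hLB.2.1.2.2 k.1).1 (hKB.2.1.2.2 k.2).1 i j i' j'
  · intro i j k j' k'
    rw [ip_tens, ip_tens]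
    exact plane_delta (fun p q => L₂ i.1 p q) (fun p q => L₃ i.1 p q) (fun p q => K₂ i.2 p q) (fun p q => K₃ i.2 p q) (hLB.2.2.1 i.1).1 (hKB.2.2.1 i.2).1 j k j' k'
  · intro j i k i' k'
    rw [ip_tens, ip_tens]
    exact plane_delta (fun p q => L₂ p j.1 q) (fun p q => L₃ p j.1 q) (fun p q => K₂ p j.2 q) (fun p q => K₃ p j.2 q) (hLB.2.2.2.1 j.1).1 (hKB.2.2.2.1 j.2).1 i k i' k'
  · intro k i j i' j'
    rw [ip_tens, ip_tens]
    exact plane_delta (fun p q => L₂ p q k.1) (fun p q => L₃ p q k.1) (fun p q => K₂ p q k.2) (fun p q => K₃ p q k.2) (hLB.2.2.2.2 k.1).1 (hKB.2.2.2.2 k.2).1 i j i' j'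
end
end
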